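/- Let π₁,…,π_N be density matrices, suppose supp(πᵢ) ⊆ Σ_{k≠i} supp(π_k) for some i, and let C ≥ 2. Define ρ_b as (any positive multiple of) Σ over tuples (i₁,…,i_C) not all equal of π_{i₁}⊗⋯⊗π_{i_C}. Then any positive semidefinite operator F_a on H^{⊗C} with tr(F_a ρ_b) = 0 satisfies tr(F_a πᵢ^{⊗C}) = 0. -/

import Mathlib

open scoped ComplexOrder
open Matrix

/-- The `C`-fold tensor product `π_{f 0} ⊗ ⋯ ⊗ π_{f (C-1)}`, realized as a matrix
acting on `(ℂ^d)^{⊗C} ≅ ℂ^(Fin C → Fin d)`. -/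
noncomputable def tensorPow {d N C : ℕ} (π : Fin N → Matrix (Fin d) (Fin d) ℂ)
    (f : Fin C → Fin N) : Matrix (Fin C → Fin d) (Fin C → Fin d) ℂ :=
  fun x y => ∏ t, π (f t) (x t) (y t)

theorem Matrix.posSemidef_iff_eq_transpose_mul_self {n : Type*} [Fintype n] [DecidableEq n]
    {A : Matrix n n ℂ} : A.PosSemidef ↔ ∃ B : Matrix n n ℂ, A = Bᴴ * B := by
  open scoped MatrixOrder in
  constructor
  · intro hA
    obtain ⟨B, hB⟩ := CStarAlgebra.nonneg_iff_eq_star_mul_self.mp hA.nonneg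
    exact ⟨B, hB⟩
  · rintro ⟨B, rfl⟩
    exact posSemidef_conjTranspose_mul_self B

/-- Elementary tensor of vectors. -/
noncomputable def tvec {d C : ℕ} (u : Fin C → (Fin d → ℂ)) : (Fin C → Fin d) → ℂ :=
  fun x => ∏ t, u t (x t)

lemma tensorPow_mulVec_tvec {d N C : ℕ} (π : Fin N → Matrix (Fin d) (Fin d) ℂ)
    (f : Fin C → Fin N) (z : Fin C → (Fin d → ℂ)) :
    tensorPow π f *ᵥ tvec z = tvec (fun t => π (f t) *ᵥ z t) := by
  funext x
  simp only [tvec, Matrix.mulVec, dotProduct, tensorPow]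
  rw [Finset.prod_univ_sum]
  rw [Fintype.piFinset_univ]
  exact Finset.sum_congr rfl fun y _ => (Finset.prod_mul_distrib).symm

lemma tvec_single {d C : ℕ} (y : Fin C → Fin d) :
    tvec (fun t => (Pi.single (y t) 1 : Fin d → ℂ)) = Pi.single y 1 := by
  funext x
  by_cases h : x = y
  · subst h; simp [tvec, Pi.single_apply]
  · have hex : ∃ t, x t ≠ y t := by
      by_contra hc; push_neg at hc; exact h (funext hc)
    obtain ⟨t0, ht0⟩ := hex
    rw [tvec, Pi.single_apply, if_neg h]
    exact Finset.prod_eq_zero (Finset.mem_univ t0) (by simp [Pi.single_apply, ht0])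

lemma tvec_update {d C : ℕ} (u : Fin C → (Fin d → ℂ)) (t0 : Fin C) (v : Fin d → ℂ) :
    tvec (Function.update u t0 v)
      = fun x => v (x t0) * ∏ t ∈ Finset.univ.erase t0, u t (x t) := by
  funext x
  rw [tvec, ← Finset.mul_prod_erase Finset.univ _ (Finset.mem_univ t0),
    Function.update_self]
  congr 1
  exact Finset.prod_congr rfl fun t ht => by
    rw [Function.update_of_ne (Finset.ne_of_mem_erase ht)]

lemma tensorPow_posSemidef {d N C : ℕ} (π : Fin N → Matrix (Fin d) (Fin d) ℂ)
    (hpsd : ∀ i, (π i).PosSemidef) (f : Fin C → Fin N) : (tensorPow π f).PosSemidef := by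
  have h : ∀ t : Fin C, ∃ B : Matrix (Fin d) (Fin d) ℂ, π (f t) = Bᴴ * B :=
    fun t => Matrix.posSemidef_iff_eq_transpose_mul_self.mp (hpsd (f t))
  choose B hB using h
  refine Matrix.posSemidef_iff_eq_transpose_mul_self.mpr
    ⟨fun z x => ∏ t, B t (z t) (x t), ?_⟩
  ext x y
  simp only [tensorPow, Matrix.mul_apply, Matrix.conjTranspose_apply]
  calc ∏ t, π (f t) (x t) (y t)
      = ∏ t, ∑ j, star (B t j (x t)) * B t j (y t) := by
        refine Finset.prod_congr rfl fun t _ => ?_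
        rw [hB t]; simp [Matrix.mul_apply, Matrix.conjTranspose_apply]
    _ = ∑ z ∈ Fintype.piFinset (fun _ : Fin C => (Finset.univ : Finset (Fin d))),
          ∏ t, star (B t (z t) (x t)) * B t (z t) (y t) := Finset.prod_univ_sum _ _
    _ = ∑ z : Fin C → Fin d, star (∏ t, B t (z t) (x t)) * ∏ t, B t (z t) (y t) := by
        rw [Fintype.piFinset_univ]
        exact Finset.sum_congr rfl fun z _ => by
          rw [Finset.prod_mul_distrib, ← star_prod]

lemma trace_CTMS_nonneg {m n : Type*} [Fintype m] [Fintype n]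
    (A : Matrix m n ℂ) : 0 ≤ (Aᴴ * A).trace := by
  rw [Matrix.trace]
  refine Finset.sum_nonneg fun j _ => ?_
  rw [Matrix.diag_apply, Matrix.mul_apply]
  exact Finset.sum_nonneg fun k _ => by
    simpa [Matrix.conjTranspose_apply] using star_mul_self_nonneg (A k j)

lemma eq_zero_of_trace_CTMS {m n : Type*} [Fintype m] [Fintype n]
    (A : Matrix m n ℂ) (h : (Aᴴ * A).trace = 0) : A = 0 := by
  rw [Matrix.trace] at h
  have h1 := (Finset.sum_eq_zero_iff_of_nonneg (fun j _ => by
      rw [Matrix.diag_apply, Matrix.mul_apply]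
      exact Finset.sum_nonneg fun k _ => by
        simpa [Matrix.conjTranspose_apply] using star_mul_self_nonneg (A k j))).mp h
  ext k j
  have h2 := h1 j (Finset.mem_univ j)
  rw [Matrix.diag_apply, Matrix.mul_apply] at h2
  have h3 := (Finset.sum_eq_zero_iff_of_nonneg (fun k _ => by
      simpa [Matrix.conjTranspose_apply] using star_mul_self_nonneg (A k j))).mp h2
  have h4 := h3 k (Finset.mem_univ k)
  rw [Matrix.conjTranspose_apply] at h4
  rcases mul_eq_zero.mp h4 with h5 | h5
  · simpa using star_eq_zero.mp h5
  · simpa using h5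

lemma trace_rearrange {n : Type*} [Fintype n] [DecidableEq n]
    (P Q : Matrix n n ℂ) :
    ((P * Qᴴ)ᴴ * (P * Qᴴ)).trace = ((Pᴴ * P) * (Qᴴ * Q)).trace := by
  rw [Matrix.conjTranspose_mul, Matrix.conjTranspose_conjTranspose]
  rw [show Q * Pᴴ * (P * Qᴴ) = Q * (Pᴴ * (P * Qᴴ)) by noncomm_ring]
  rw [Matrix.trace_mul_comm]
  rw [show Pᴴ * (P * Qᴴ) * Q = Pᴴ * P * (Qᴴ * Q) by noncomm_ring]

lemma trace_mul_nonneg' {n : Type*} [Fintype n] [DecidableEq n]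
    {A B : Matrix n n ℂ} (hA : A.PosSemidef) (hB : B.PosSemidef) :
    0 ≤ (A * B).trace := by
  obtain ⟨P, rfl⟩ := Matrix.posSemidef_iff_eq_transpose_mul_self.mp hA
  obtain ⟨Q, rfl⟩ := Matrix.posSemidef_iff_eq_transpose_mul_self.mp hB
  rw [← trace_rearrange]
  exact trace_CTMS_nonneg _

lemma mul_eq_zero_of_trace_mul {n : Type*} [Fintype n] [DecidableEq n]
    {A B : Matrix n n ℂ} (hA : A.PosSemidef) (hB : B.PosSemidef)
    (h : (A * B).trace = 0) : A * B = 0 := by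
  obtain ⟨P, rfl⟩ := Matrix.posSemidef_iff_eq_transpose_mul_self.mp hA
  obtain ⟨Q, rfl⟩ := Matrix.posSemidef_iff_eq_transpose_mul_self.mp hB
  rw [← trace_rearrange] at h
  have h0 : P * Qᴴ = 0 := eq_zero_of_trace_CTMS _ h
  calc Pᴴ * P * (Qᴴ * Q) = Pᴴ * (P * Qᴴ) * Q := by noncomm_ring
    _ = 0 := by rw [h0, Matrix.mul_zero, Matrix.zero_mul]

/-- If `supp(πᵢ) ⊆ Σ_{k≠i} supp(π_k)` for some `i`, then any positive semidefinite
`F_a` with `tr(F_a ρ_b) = 0`, where `ρ_b` is a positive multiple of the sum of all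
non-constant `C`-fold tensor products of the `π`'s, also satisfies
`tr(F_a πᵢ^{⊗C}) = 0`. -/
theorem no_unambiguous_comparison_of_dependent_support {d N C : ℕ} (hC : 2 ≤ C)
    (π : Fin N → Matrix (Fin d) (Fin d) ℂ)
    (hpsd : ∀ i, (π i).PosSemidef) (htr : ∀ i, (π i).trace = 1)
    (i : Fin N)
    (hsupp : LinearMap.range (π i).mulVecLin ≤
        ⨆ k : {k : Fin N // k ≠ i}, LinearMap.range (π (k : Fin N)).mulVecLin)
    (c : ℝ) (hc : 0 < c)
    (ρb : Matrix (Fin C → Fin d) (Fin C → Fin d) ℂ)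
    (hρb : ρb = (c : ℂ) •
        ∑ f ∈ Finset.univ.filter (fun f : Fin C → Fin N => ¬ ∀ s t, f s = f t),
          tensorPow π f)
    (Fa : Matrix (Fin C → Fin d) (Fin C → Fin d) ℂ) (hFa : Fa.PosSemidef)
    (hzero : (Fa * ρb).trace = 0) :
    (Fa * tensorPow π (fun _ => i)).trace = 0 := by
  classical
  set S := Finset.univ.filter (fun f : Fin C → Fin N => ¬ ∀ s t, f s = f t) with hS
  -- each individual term has zero trace against Fa, hence zero product
  have hexp : (Fa * ρb).trace = (c : ℂ) * ∑ f ∈ S, (Fa * tensorPow π f).trace := by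
    rw [hρb, Matrix.mul_smul, Matrix.trace_smul, Matrix.mul_sum, Matrix.trace_sum,
      smul_eq_mul]
  have hcne : (c : ℂ) ≠ 0 := Complex.ofReal_ne_zero.mpr hc.ne'
  have hsum : ∑ f ∈ S, (Fa * tensorPow π f).trace = 0 := by
    rw [hexp] at hzero
    exact (mul_eq_zero.mp hzero).resolve_left hcne
  have hnn : ∀ f ∈ S, 0 ≤ (Fa * tensorPow π f).trace :=
    fun f _ => trace_mul_nonneg' hFa (tensorPow_posSemidef π hpsd f)
  have hterm : ∀ f ∈ S, Fa * tensorPow π f = 0 := fun f hf =>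
    mul_eq_zero_of_trace_mul hFa (tensorPow_posSemidef π hpsd f)
      ((Finset.sum_eq_zero_iff_of_nonneg hnn).mp hsum f hf)
  have hW : ∀ f ∈ S, ∀ w, Fa *ᵥ (tensorPow π f *ᵥ w) = 0 := by
    intro f hf w
    rw [Matrix.mulVec_mulVec, hterm f hf, Matrix.zero_mulVec]
  -- coordinates 0 and 1
  have h0C : 0 < C := by omega
  have h1C : 1 < C := by omega
  let t0 : Fin C := ⟨0, h0C⟩
  let t1 : Fin C := ⟨1, h1C⟩
  have ht01 : t1 ≠ t0 := by simp [t0, t1, Fin.ext_iff]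
  -- key: Fa kills the range of the constant tensor power
  have key : ∀ z : Fin C → (Fin d → ℂ), Fa *ᵥ tvec (fun t => π i *ᵥ z t) = 0 := by
    intro z
    set u : Fin C → (Fin d → ℂ) := fun t => π i *ᵥ z t with hu
    have hmem : u t0 ∈ ⨆ k : {k : Fin N // k ≠ i},
        LinearMap.range (π (k : Fin N)).mulVecLin := by
      apply hsupp
      exact ⟨z t0, by simp [Matrix.mulVecLin_apply, hu]⟩
    rw [Submodule.mem_iSup_iff_exists_finsupp] at hmem
    obtain ⟨g, hg, hgsum⟩ := hmem
    have hdecomp : tvec u = ∑ k ∈ g.support, tvec (Function.update u t0 (g k)) := by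
      have h1 : tvec u = tvec (Function.update u t0 (u t0)) := by
        rw [Function.update_eq_self]
      rw [h1, tvec_update, ← hgsum, Finsupp.sum]
      funext x
      simp only [tvec_update, Finset.sum_apply]
      rw [Finset.sum_mul]
    rw [hdecomp]
    have hmap := map_sum Fa.mulVecLin
      (fun k => tvec (Function.update u t0 (g k))) g.support
    simp only [Matrix.mulVecLin_apply] at hmap
    rw [hmap]
    refine Finset.sum_eq_zero fun k _ => ?_
    obtain ⟨zk, hzk⟩ := hg k
    rw [Matrix.mulVecLin_apply] at hzk
    set fk : Fin C → Fin N := Function.update (fun _ => i) t0 (k : Fin N) with hfk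
    have hupd : Function.update u t0 (g k) = fun t => π (fk t) *ᵥ Function.update z t0 zk t := by
      funext t
      by_cases ht : t = t0
      · subst ht
        simp [hfk, hzk]
      · simp [Function.update_of_ne ht, hu, hfk]
    have hfkS : fk ∈ S := by
      rw [hS, Finset.mem_filter]
      refine ⟨Finset.mem_univ _, fun hall => ?_⟩
      have h01 := hall t0 t1
      rw [hfk, Function.update_self, Function.update_of_ne ht01] at h01
      exact k.2 h01
    rw [hupd, ← tensorPow_mulVec_tvec]
    exact hW fk hfkS _
  -- conclude
  have hPzero : Fa * tensorPow π (fun _ => i) = 0 := by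
    ext x j
    have hsingle : tensorPow π (fun _ => i) *ᵥ (Pi.single j 1 : (Fin C → Fin d) → ℂ)
        = tvec (fun t => π i *ᵥ Pi.single (j t) 1) := by
      rw [← tvec_single, tensorPow_mulVec_tvec]
    have h1 : (Fa * tensorPow π (fun _ => i)) *ᵥ (Pi.single j 1 : (Fin C → Fin d) → ℂ) = 0 := by
      rw [← Matrix.mulVec_mulVec, hsingle]
      exact key _
    have h2 := congr_fun h1 x
    simp only [Matrix.mulVec, dotProduct, Pi.single_apply, mul_ite, mul_one,
      mul_zero, Finset.sum_ite_eq', Finset.mem_univ, if_true, Pi.zero_apply] at h2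
    simpa using h2
  rw [hPzero, Matrix.trace_zero]
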